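/- arXiv:2109.00592 — 2 statements merged into one kernel-verified Lean document; each statement's English description precedes it below -/
import Mathlib

section
/- Let R be an F-finite F-pure Noetherian ring of prime characteristic p and let I = {I_n} be an F-pure filtration. Then the associated graded algebra gr(I) = ⊕_{n≥0} I_n/I_{n+1} is F-pure. -/
set_option maxHeartbeats 1000000
set_option synthInstance.maxHeartbeats 400000

noncomputable section

section Core
variable {R : Type*} [CommRing R]

/-- A Frobenius splitting: identifying `R^{1/p}` with `R` via `p`-th roots, an additive map
`φ : R^{1/p} → R` which is `R`-linear (`φ(a^p b^{1/p}) = a φ(b^{1/p})`) and splits the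
inclusion `R ⊆ R^{1/p}` (equivalently `φ 1 = 1`). -/
def IsFrobeniusSplitting (p : ℕ) (φ : R → R) : Prop :=
  (∀ a b : R, φ (a + b) = φ a + φ b) ∧ (∀ a b : R, φ (a ^ p * b) = a * φ b) ∧ φ 1 = 1

/-- A ring is `F`-split (`F`-pure in the `F`-finite case) if Frobenius splits. -/
def IsFSplitRing (p : ℕ) (A : Type*) [CommRing A] : Prop :=
  ∃ φ : A → A, IsFrobeniusSplitting p φ

/-- `A` is `F`-finite: `A` is a finitely generated module over its subring of `p`-th powers. -/
def IsFFiniteRing (p : ℕ) (A : Type*) [CommRing A] : Prop :=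
  ∃ (n : ℕ) (g : Fin n → A), ∀ x : A, ∃ c : Fin n → A, x = ∑ i, c i ^ p * g i

/-- A filtration of ideals. -/
def IsIdealFiltration (I : ℕ → Ideal R) : Prop :=
  I 0 = ⊤ ∧ (∀ n, I (n + 1) ≤ I n) ∧ ∀ m n, I m * I n ≤ I (m + n)

/-- An `F`-pure filtration. -/
def IsFPureFiltration (p : ℕ) (I : ℕ → Ideal R) : Prop :=
  IsIdealFiltration I ∧ ∃ φ : R → R, IsFrobeniusSplitting p φ ∧
    ∀ n : ℕ, ∀ x ∈ I (n * p + 1), φ x ∈ I (n + 1)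

/-- The Frobenius power `J^{[p]}` of an ideal. -/
def Ideal.frobPow (p : ℕ) (J : Ideal R) : Ideal R :=
  Ideal.span ((fun a => a ^ p) '' (J : Set R))

/-- The `n`-th symbolic power `I^{(n)}`. -/
def Ideal.symbPow (I : Ideal R) (n : ℕ) : Ideal R where
  carrier := {r : R | ∃ s : R, (∀ P ∈ I.minimalPrimes, s ∉ P) ∧ s * r ∈ I ^ n}
  zero_mem' :=
    ⟨1, fun P hP h1 => hP.1.1.ne_top ((Ideal.eq_top_iff_one P).mpr h1), by simp⟩
  add_mem' := by
    rintro a b ⟨s, hs, hsa⟩ ⟨t, ht, htb⟩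
    refine ⟨s * t, fun P hP hst => ((hP.1.1.mem_or_mem hst).elim (hs P hP) (ht P hP)), ?_⟩
    have h1 : (s * t) * (a + b) = t * (s * a) + s * (t * b) := by ring
    rw [h1]
    exact (I ^ n).add_mem (Ideal.mul_mem_left _ _ hsa) (Ideal.mul_mem_left _ _ htb)
  smul_mem' := by
    rintro c x ⟨s, hs, hsx⟩
    refine ⟨s, hs, ?_⟩
    have h1 : s * (c • x) = c * (s * x) := by
      simp only [smul_eq_mul]; ring
    rw [h1]
    exact Ideal.mul_mem_left _ _ hsx

end Core

section Rees
variable {R : Type*} [CommRing R]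

/-- The Rees algebra `⊕ₙ Iₙ Tⁿ ⊆ R[T]` of a filtration. -/
def filtrationRees (I : ℕ → Ideal R) (hI : IsIdealFiltration I) : Subalgebra R (Polynomial R) where
  carrier := {f : Polynomial R | ∀ n, f.coeff n ∈ I n}
  add_mem' := by
    intro f g hf hg n
    rw [Polynomial.coeff_add]
    exact (I n).add_mem (hf n) (hg n)
  mul_mem' := by
    intro f g hf hg n
    rw [Polynomial.coeff_mul]
    refine Ideal.sum_mem _ fun x hx => ?_
    have h := hI.2.2 x.1 x.2 (Ideal.mul_mem_mul (hf x.1) (hg x.2))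
    rwa [Finset.HasAntidiagonal.mem_antidiagonal.mp hx] at h
  one_mem' := by
    intro n
    cases n with
    | zero => simp [hI.1]
    | succ n => simp [Polynomial.coeff_one]
  zero_mem' := by intro n; simp
  algebraMap_mem' := by
    intro r n
    cases n with
    | zero => simp [hI.1]
    | succ n => simp [Polynomial.coeff_C]

/-- The ideal `⊕ₙ I_{n+1} Tⁿ` of the Rees algebra; the quotient is the associated graded
algebra `gr(𝕀) = ⊕ₙ Iₙ/I_{n+1}`. -/
def grFiltIdeal (I : ℕ → Ideal R) (hI : IsIdealFiltration I) : Ideal (filtrationRees I hI) where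
  carrier := {f | ∀ n, (f : Polynomial R).coeff n ∈ I (n + 1)}
  add_mem' := by
    rintro f g hf hg n
    have h : ((f + g : filtrationRees I hI) : Polynomial R) = (f : Polynomial R) + g := rfl
    rw [h, Polynomial.coeff_add]
    exact (I (n + 1)).add_mem (hf n) (hg n)
  zero_mem' := by
    intro n
    have h : ((0 : filtrationRees I hI) : Polynomial R) = 0 := rfl
    rw [h]; simp
  smul_mem' := by
    intro c f hf n
    change ((c : Polynomial R) * (f : Polynomial R)).coeff n ∈ I (n + 1)
    rw [Polynomial.coeff_mul]
    refine Ideal.sum_mem _ fun x hx => ?_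
    have h2 := hI.2.2 x.1 (x.2 + 1) (Ideal.mul_mem_mul (c.2 x.1) (hf x.2))
    have hx' : x.1 + (x.2 + 1) = n + 1 := by
      have := Finset.HasAntidiagonal.mem_antidiagonal.mp hx; omega
    rwa [hx'] at h2

end Rees

section MyAux
variable {R : Type*} [CommRing R]

/-- The coefficient-wise division-by-`p` map on polynomials induced by an additive map `φ`. -/
def psiPoly (p : ℕ) (hp : 0 < p) (φ : R →+ R) (f : Polynomial R) : Polynomial R :=
  Polynomial.ofFinsupp <| AddMonoidAlgebra.ofCoeff <| Finsupp.onFinset (f.support.image (· / p))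
    (fun n => φ (f.coeff (n * p)))
    (fun n hn => by
      refine Finset.mem_image.2 ⟨n * p, ?_, Nat.mul_div_cancel n hp⟩
      apply Polynomial.mem_support_iff.2
      intro h
      simp only [h, map_zero, ne_eq, not_true_eq_false] at hn)

theorem psiPoly_coeff (p : ℕ) (hp : 0 < p) (φ : R →+ R) (f : Polynomial R) (n : ℕ) :
    (psiPoly p hp φ f).coeff n = φ (f.coeff (n * p)) := rfl

theorem psiPoly_add (p : ℕ) (hp : 0 < p) (φ : R →+ R) (f g : Polynomial R) :
    psiPoly p hp φ (f + g) = psiPoly p hp φ f + psiPoly p hp φ g := by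
  ext n
  simp [psiPoly_coeff]

theorem psiPoly_sub (p : ℕ) (hp : 0 < p) (φ : R →+ R) (f g : Polynomial R) :
    psiPoly p hp φ (f - g) = psiPoly p hp φ f - psiPoly p hp φ g := by
  ext n
  simp [psiPoly_coeff]

theorem psiPoly_one (p : ℕ) (hp : 0 < p) (φ : R →+ R) (hφ1 : φ 1 = 1) :
    psiPoly p hp φ (1 : Polynomial R) = 1 := by
  ext n
  rw [psiPoly_coeff, Polynomial.coeff_one, Polynomial.coeff_one]
  rcases Nat.eq_zero_or_pos n with h | h
  · simp [h, hφ1]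
  · rw [if_neg (Nat.mul_ne_zero (by omega) (by omega)), if_neg (by omega), map_zero]

theorem coeff_pow_char {p : ℕ} (hp : p.Prime) [CharP R p] (a : Polynomial R) (i : ℕ) :
    (a ^ p).coeff i = if p ∣ i then (a.coeff (i / p)) ^ p else 0 := by
  haveI : Fact p.Prime := ⟨hp⟩
  rw [← Polynomial.map_frobenius_expand (p := p) (f := a), Polynomial.coeff_map,
    Polynomial.coeff_expand hp.pos]
  split_ifs with h
  · rfl
  · simp

theorem psiPoly_mul_pow {p : ℕ} (hp : p.Prime) [CharP R p] (φ : R →+ R)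
    (hφ : ∀ a b : R, φ (a ^ p * b) = a * φ b) (a b : Polynomial R) :
    psiPoly p hp.pos φ (a ^ p * b) = a * psiPoly p hp.pos φ b := by
  ext n
  rw [psiPoly_coeff, Polynomial.coeff_mul, Polynomial.coeff_mul, map_sum]
  have hsub : (Finset.HasAntidiagonal.antidiagonal n).image (fun y : ℕ × ℕ => (y.1 * p, y.2 * p)) ⊆
      Finset.HasAntidiagonal.antidiagonal (n * p) := by
    intro x hx
    obtain ⟨y, hy, rfl⟩ := Finset.mem_image.mp hx
    have := Finset.HasAntidiagonal.mem_antidiagonal.mp hy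
    rw [Finset.HasAntidiagonal.mem_antidiagonal]
    simp only
    rw [← add_mul, this]
  rw [← Finset.sum_subset hsub]
  · rw [Finset.sum_image (by
      intro x _ y _ h
      have h1 := congrArg Prod.fst h
      have h2 := congrArg Prod.snd h
      simp only at h1 h2
      exact Prod.ext (Nat.eq_of_mul_eq_mul_right hp.pos h1)
        (Nat.eq_of_mul_eq_mul_right hp.pos h2))]
    refine Finset.sum_congr rfl fun y _ => ?_
    rw [coeff_pow_char hp, if_pos (dvd_mul_left p y.1), Nat.mul_div_cancel _ hp.pos, hφ]
    simp only [psiPoly_coeff]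
  · intro x hx hnx
    have hx1 : ¬ p ∣ x.1 := by
      intro hdvd
      apply hnx
      have hsum := Finset.HasAntidiagonal.mem_antidiagonal.mp hx
      have hdvd2 : p ∣ x.2 := (Nat.dvd_add_right hdvd).mp (hsum ▸ dvd_mul_left p n)
      refine Finset.mem_image.mpr ⟨(x.1 / p, x.2 / p), ?_, ?_⟩
      · rw [Finset.HasAntidiagonal.mem_antidiagonal]
        have : x.1 / p * p + x.2 / p * p = n * p := by
          rw [Nat.div_mul_cancel hdvd, Nat.div_mul_cancel hdvd2, hsum]
        exact Nat.eq_of_mul_eq_mul_right hp.pos (by rw [add_mul]; exact this)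
      · simp [Nat.div_mul_cancel hdvd, Nat.div_mul_cancel hdvd2]
    rw [coeff_pow_char hp, if_neg hx1, zero_mul, map_zero]

theorem filt_antitone {I : ℕ → Ideal R} (hI : IsIdealFiltration I) :
    ∀ {m n : ℕ}, m ≤ n → I n ≤ I m := by
  intro m n h
  induction n with
  | zero => simp_all
  | succ k ih =>
    rcases Nat.lt_or_ge m (k + 1) with h' | h'
    · exact le_trans (hI.2.1 k) (ih (by omega))
    · have : m = k + 1 := by omega
      subst this
      exact le_rfl

end MyAux

/-- The associated graded algebra `gr(𝕀) = ⊕ₙ Iₙ/I_{n+1}` of an `F`-pure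
filtration on an `F`-finite `F`-pure Noetherian ring of characteristic `p` is `F`-pure. -/
theorem isFSplitRing_associatedGraded
    {R : Type*} [CommRing R] [IsNoetherianRing R]
    (p : ℕ) (hp : p.Prime) [CharP R p]
    (hFF : IsFFiniteRing p R) (hFP : IsFSplitRing p R)
    (I : ℕ → Ideal R) (hI : IsIdealFiltration I)
    (hFPfil : IsFPureFiltration p I) :
    IsFSplitRing p (↥(filtrationRees I hI) ⧸ grFiltIdeal I hI) := by
  classical
  obtain ⟨-, φ₀, ⟨hadd, hmul, hone⟩, hpure⟩ := hFPfil
  set φ : R →+ R := AddMonoidHom.mk' φ₀ hadd with hφdef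
  have hφmul : ∀ a b : R, φ (a ^ p * b) = a * φ b := hmul
  -- the polynomial-level splitting preserves the Rees algebra
  have hRees : ∀ f : Polynomial R, (∀ n, f.coeff n ∈ I n) →
      ∀ n, (psiPoly p hp.pos φ f).coeff n ∈ I n := by
    intro f hf n
    rw [psiPoly_coeff]
    cases n with
    | zero => simp [hI.1]
    | succ m =>
      have h1 : f.coeff ((m + 1) * p) ∈ I (m * p + 1) := by
        refine filt_antitone hI ?_ (hf ((m + 1) * p))
        have := hp.two_le; nlinarith
      exact hpure m _ h1
  -- the induced map on the Rees algebra
  set Ψ : (filtrationRees I hI) → (filtrationRees I hI) :=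
    fun f => ⟨psiPoly p hp.pos φ (f : Polynomial R), hRees _ f.2⟩ with hΨdef
  have hΨadd : ∀ a b, Ψ (a + b) = Ψ a + Ψ b := by
    intro a b
    apply Subtype.ext
    show psiPoly p hp.pos φ ((a : Polynomial R) + b) = _
    rw [psiPoly_add]; rfl
  have hΨsub : ∀ a b, Ψ (a - b) = Ψ a - Ψ b := by
    intro a b
    apply Subtype.ext
    show psiPoly p hp.pos φ ((a : Polynomial R) - b) = _
    rw [psiPoly_sub]; rfl
  have hΨmul : ∀ a b, Ψ (a ^ p * b) = a * Ψ b := by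
    intro a b
    apply Subtype.ext
    show psiPoly p hp.pos φ ((a : Polynomial R) ^ p * b) = (a : Polynomial R) * _
    rw [psiPoly_mul_pow hp φ hφmul]
  have hΨone : Ψ 1 = 1 := by
    apply Subtype.ext
    show psiPoly p hp.pos φ (1 : Polynomial R) = 1
    exact psiPoly_one p hp.pos φ hone
  -- Ψ preserves the graded ideal
  have hJ : ∀ f, f ∈ grFiltIdeal I hI → Ψ f ∈ grFiltIdeal I hI := by
    intro f hf n
    show (psiPoly p hp.pos φ (f : Polynomial R)).coeff n ∈ I (n + 1)
    rw [psiPoly_coeff]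
    exact hpure n _ (hf (n * p))
  set J := grFiltIdeal I hI
  set q : (filtrationRees I hI) →+* _ := Ideal.Quotient.mk J with hqdef
  have hsurj : Function.Surjective q := Ideal.Quotient.mk_surjective
  set sec : _ → (filtrationRees I hI) := Function.surjInv hsurj with hsecdef
  have hsec : ∀ x, q (sec x) = x := fun x => Function.surjInv_eq hsurj x
  -- well-definedness
  have hwd : ∀ a b, q a = q b → q (Ψ a) = q (Ψ b) := by
    intro a b h
    rw [Ideal.Quotient.eq] at h ⊢
    rw [← hΨsub]
    exact hJ _ h
  refine ⟨fun x => q (Ψ (sec x)), ?_, ?_, ?_⟩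
  · intro x y
    show q (Ψ (sec (x + y))) = q (Ψ (sec x)) + q (Ψ (sec y))
    have h1 : q (sec (x + y)) = q (sec x + sec y) := by
      rw [map_add, hsec, hsec, hsec]
    rw [hwd _ _ h1, hΨadd, map_add]
  · intro x y
    show q (Ψ (sec (x ^ p * y))) = x * q (Ψ (sec y))
    have h1 : q (sec (x ^ p * y)) = q ((sec x) ^ p * sec y) := by
      rw [map_mul, map_pow, hsec, hsec, hsec]
    rw [hwd _ _ h1, hΨmul, map_mul, hsec]
  · show q (Ψ (sec 1)) = 1
    have h1 : q (sec 1) = q 1 := by rw [hsec, map_one]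
    rw [hwd _ _ h1, hΨone, map_one]
end
end

section
/- Let R be a regular ring and I a radical ideal of R. Then I^n = I^{(n)} for every n ≥ 0 if and only if the associated graded ring gr_I(R) = ⊕_{n≥0} I^n/I^{n+1} is torsion-free as an R/I-module, and this holds if and only if Ass_R(R/I^n) ⊆ Ass_R(R/I) for all n. -/
set_option maxHeartbeats 1000000
set_option synthInstance.maxHeartbeats 400000

noncomputable section

open scoped DirectSum

section AuxLemmas
variable {R : Type*} [CommRing R]

lemma directSum_exists_component {ι : Type*} [DecidableEq ι] {M : ι → Type*}
    [∀ i, AddCommGroup (M i)] [∀ i, Module R (M i)] {P : Ideal R}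
    (h : IsAssociatedPrime P (⨁ i, M i)) : ∃ i, IsAssociatedPrime P (M i) := by
  classical
  obtain ⟨hP, x, hx⟩ := h
  have hPle : ∀ i, P ≤ ((⊥ : Submodule R (M i)).colon {x i}).radical := by
    intro i a ha
    rw [hx] at ha
    obtain ⟨k, hk⟩ := ha
    refine ⟨k, ?_⟩
    rw [Submodule.mem_colon_singleton, Submodule.mem_bot] at hk ⊢
    calc a ^ k • x i = (a ^ k • x) i := (DFinsupp.smul_apply _ _ _).symm
    _ = 0 := by rw [hk]; rfl
  have hprod : (∏ i ∈ x.support, ((⊥ : Submodule R (M i)).colon {x i}).radical) ≤ P := by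
    rw [hx]
    intro a ha
    have hall : ∀ i ∈ x.support, a ∈ ((⊥ : Submodule R (M i)).colon {x i}).radical :=
      fun i hi => (Ideal.prod_le_inf.trans (Finset.inf_le hi)) ha
    choose! k hk using hall
    refine ⟨∑ i ∈ x.support, k i, ?_⟩
    rw [Submodule.mem_colon_singleton, Submodule.mem_bot]
    refine DFinsupp.ext fun i => ?_
    rw [DFinsupp.smul_apply, DFinsupp.zero_apply]
    by_cases hi : i ∈ x.support
    · have h2 := hk i hi
      rw [Submodule.mem_colon_singleton, Submodule.mem_bot] at h2
      rw [← Finset.sum_erase_add _ _ hi, pow_add, mul_smul, h2, smul_zero]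
    · rw [DFinsupp.notMem_support_iff.mp hi, smul_zero]
  obtain ⟨i, _, hle⟩ := hP.prod_le.mp hprod
  exact ⟨i, hP, x i, le_antisymm (hPle i) hle⟩

lemma directSum_of_component {ι : Type*} [DecidableEq ι] {M : ι → Type*}
    [∀ i, AddCommGroup (M i)] [∀ i, Module R (M i)] {P : Ideal R} (n : ι)
    (h : IsAssociatedPrime P (M n)) : IsAssociatedPrime P (⨁ i, M i) :=
  h.map_of_injective (DirectSum.lof R ι M n)
    (fun a b hab => DirectSum.of_injective n (by
      rwa [← DirectSum.lof_eq_of R, ← DirectSum.lof_eq_of R]))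

lemma mem_symbPow {I : Ideal R} {n : ℕ} {r : R} :
    r ∈ I.symbPow n ↔ ∃ s : R, (∀ P ∈ I.minimalPrimes, s ∉ P) ∧ s * r ∈ I ^ n :=
  Iff.rfl

lemma pow_le_symbPow (I : Ideal R) (n : ℕ) : I ^ n ≤ I.symbPow n := by
  intro r hr
  exact ⟨1, fun P hP h1 => hP.1.1.ne_top ((Ideal.eq_top_iff_one P).mpr h1), by simpa⟩

lemma minPrimes_finite [IsNoetherianRing R] (I : Ideal R) : I.minimalPrimes.Finite := by
  rw [Ideal.minimalPrimes_eq_comap]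
  exact (minimalPrimes.finite_of_isNoetherianRing (R ⧸ I)).image _

lemma exists_avoid [IsNoetherianRing R] {I P : Ideal R}
    (hP : P.IsPrime) (hIP : I ≤ P) (hn : P ∉ I.minimalPrimes) :
    ∃ s ∈ P, ∀ Q ∈ I.minimalPrimes, s ∉ Q := by
  have hfin := minPrimes_finite I
  by_contra hc
  push_neg at hc
  have hsub : (P : Set R) ⊆ ⋃ Q ∈ (↑hfin.toFinset : Set (Ideal R)), (Q : Set R) := by
    intro s hs
    obtain ⟨Q, hQ, hsQ⟩ := hc s hs
    exact Set.mem_biUnion (show Q ∈ (↑hfin.toFinset : Set (Ideal R)) from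
      hfin.mem_toFinset.mpr hQ) hsQ
  rw [Ideal.subset_union_prime P P (fun Q hQ _ _ => (hfin.mem_toFinset.mp hQ).1.1)] at hsub
  obtain ⟨Q, hQ, hPQ⟩ := hsub
  rw [Set.Finite.mem_toFinset] at hQ
  obtain ⟨Q₀, hQ₀, hQ₀P⟩ := Ideal.exists_minimalPrimes_le hIP
  have h1 : Q ≤ Q₀ := hQ.2 ⟨hQ₀.1.1, hQ₀.1.2⟩ (hQ₀P.trans hPQ)
  have hPQ' : P = Q := le_antisymm hPQ (h1.trans hQ₀P)
  exact hn (hPQ' ▸ hQ)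

lemma minPrimes_subset_assoc [IsNoetherianRing R] {I : Ideal R} (hrad : I.IsRadical) :
    I.minimalPrimes ⊆ associatedPrimes R (R ⧸ I) := by
  classical
  intro P hP
  have hPp : P.IsPrime := hP.1.1
  have hfin := minPrimes_finite I
  set T : Finset (Ideal R) := hfin.toFinset.erase P with hT
  have hprodP : ¬ (∏ Q ∈ T, Q) ≤ P := by
    intro hle
    obtain ⟨Q, hQT, hQP⟩ := hPp.prod_le.mp hle
    have hQmem : Q ∈ I.minimalPrimes := hfin.mem_toFinset.mp (Finset.mem_of_mem_erase hQT)
    have h2 : P ≤ Q := hP.2 ⟨hQmem.1.1, hQmem.1.2⟩ hQP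
    exact (Finset.ne_of_mem_erase hQT) (le_antisymm hQP h2)
  obtain ⟨x, hxprod, hxP⟩ := SetLike.not_le_iff_exists.mp hprodP
  have hIrad : sInf I.minimalPrimes = I := by rw [Ideal.sInf_minimalPrimes, hrad.radical]
  refine isAssociatedPrime_iff.mpr ⟨hPp, Submodule.Quotient.mk x, ?_⟩
  rw [Submodule.bot_colon']
  ext a
  rw [Submodule.mem_annihilator_span_singleton, ← Submodule.Quotient.mk_smul,
    Submodule.Quotient.mk_eq_zero]
  constructor
  · intro ha
    rw [← hIrad]
    rw [Submodule.mem_sInf]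
    intro Q hQ
    by_cases hQP : Q = P
    · subst hQP
      rw [smul_eq_mul]
      exact Ideal.mul_mem_right _ _ ha
    · have hQT : Q ∈ T := Finset.mem_erase.mpr ⟨hQP, hfin.mem_toFinset.mpr hQ⟩
      have hxQ : x ∈ Q := (Ideal.prod_le_inf.trans (Finset.inf_le hQT)) hxprod
      rw [smul_eq_mul]
      exact Ideal.mul_mem_left _ _ hxQ
  · intro ha
    have h3 : a * x ∈ P := hP.1.2 (by rwa [smul_eq_mul] at ha)
    exact (hPp.mem_or_mem h3).resolve_right hxP

lemma assoc_subset_min_of_radical [IsNoetherianRing R] {I : Ideal R} (hrad : I.IsRadical) :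
    associatedPrimes R (R ⧸ I) ⊆ I.minimalPrimes := by
  intro P hP
  obtain ⟨hPp, y, hy⟩ := isAssociatedPrime_iff.mp (AssociatedPrimes.mem_iff.mp hP)
  rw [Submodule.bot_colon'] at hy
  obtain ⟨x, rfl⟩ := Submodule.Quotient.mk_surjective _ y
  have hxI : x ∉ I := by
    intro h
    rw [(Submodule.Quotient.mk_eq_zero _).mpr h, Submodule.span_zero_singleton,
      Submodule.annihilator_bot] at hy
    exact hPp.ne_top hy
  have hIP : I ≤ P := by
    intro a ha
    rw [hy, Submodule.mem_annihilator_span_singleton, ← Submodule.Quotient.mk_smul,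
      Submodule.Quotient.mk_eq_zero, smul_eq_mul]
    exact Ideal.mul_mem_right _ _ ha
  by_contra hmin
  obtain ⟨s, hsP, hs⟩ := exists_avoid hPp hIP hmin
  rw [hy, Submodule.mem_annihilator_span_singleton, ← Submodule.Quotient.mk_smul,
    Submodule.Quotient.mk_eq_zero, smul_eq_mul] at hsP
  have hIrad : sInf I.minimalPrimes = I := by rw [Ideal.sInf_minimalPrimes, hrad.radical]
  apply hxI
  rw [← hIrad, Submodule.mem_sInf]
  intro Q hQ
  exact ((hQ.1.1.mem_or_mem (hQ.1.2 hsP)).resolve_left (hs Q hQ))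

lemma assoc_pow_subset_min [IsNoetherianRing R] {I : Ideal R}
    (hA : ∀ m : ℕ, I ^ m = I.symbPow m) (n : ℕ) :
    associatedPrimes R (R ⧸ I ^ n) ⊆ I.minimalPrimes := by
  intro P hP
  obtain ⟨hPp, y, hy⟩ := isAssociatedPrime_iff.mp (AssociatedPrimes.mem_iff.mp hP)
  rw [Submodule.bot_colon'] at hy
  obtain ⟨x, rfl⟩ := Submodule.Quotient.mk_surjective _ y
  have hx : x ∉ (I ^ n : Ideal R) := by
    intro h
    rw [(Submodule.Quotient.mk_eq_zero _).mpr h, Submodule.span_zero_singleton,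
      Submodule.annihilator_bot] at hy
    exact hPp.ne_top hy
  have hpowP : (I : Ideal R) ^ n ≤ P := by
    intro a ha
    rw [hy, Submodule.mem_annihilator_span_singleton, ← Submodule.Quotient.mk_smul,
      Submodule.Quotient.mk_eq_zero, smul_eq_mul]
    exact Ideal.mul_mem_right _ _ ha
  have hIP : I ≤ P := hPp.le_of_pow_le hpowP
  by_contra hmin
  obtain ⟨s, hsP, hs⟩ := exists_avoid hPp hIP hmin
  rw [hy, Submodule.mem_annihilator_span_singleton, ← Submodule.Quotient.mk_smul,
    Submodule.Quotient.mk_eq_zero, smul_eq_mul] at hsP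
  exact hx ((hA n) ▸ (mem_symbPow.mpr ⟨s, hs, hsP⟩))

lemma assoc_graded_subset_min [IsNoetherianRing R] {I : Ideal R}
    (hA : ∀ m : ℕ, I ^ m = I.symbPow m) (n : ℕ) :
    associatedPrimes R (↑(I ^ n) ⧸
      Submodule.comap (I ^ n : Submodule R R).subtype (I ^ (n + 1) : Submodule R R)) ⊆
      I.minimalPrimes := by
  intro P hP
  obtain ⟨hPp, y, hy⟩ := isAssociatedPrime_iff.mp (AssociatedPrimes.mem_iff.mp hP)
  rw [Submodule.bot_colon'] at hy
  obtain ⟨⟨x, hxmem⟩, rfl⟩ := Submodule.Quotient.mk_surjective _ y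
  have hx : x ∉ (I ^ (n + 1) : Ideal R) := by
    intro h
    have hmem : (⟨x, hxmem⟩ : (I ^ n : Submodule R R)) ∈
        Submodule.comap (I ^ n : Submodule R R).subtype (I ^ (n + 1) : Submodule R R) := h
    rw [(Submodule.Quotient.mk_eq_zero _).mpr hmem, Submodule.span_zero_singleton,
      Submodule.annihilator_bot] at hy
    exact hPp.ne_top hy
  have hIP : I ≤ P := by
    intro a ha
    rw [hy, Submodule.mem_annihilator_span_singleton, ← Submodule.Quotient.mk_smul,
      Submodule.Quotient.mk_eq_zero]
    show a • x ∈ (I ^ (n + 1) : Ideal R)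
    rw [smul_eq_mul, pow_succ, mul_comm (I ^ n) I]
    exact Ideal.mul_mem_mul ha hxmem
  by_contra hmin
  obtain ⟨s, hsP, hs⟩ := exists_avoid hPp hIP hmin
  rw [hy, Submodule.mem_annihilator_span_singleton, ← Submodule.Quotient.mk_smul,
    Submodule.Quotient.mk_eq_zero] at hsP
  have hsx : s * x ∈ (I ^ (n + 1) : Ideal R) := hsP
  exact hx ((hA (n + 1)) ▸ (mem_symbPow.mpr ⟨s, hs, hsx⟩))

lemma symb_le_pow_of_assoc [IsNoetherianRing R] {I : Ideal R}
    (h : ∀ n : ℕ, associatedPrimes R (R ⧸ I ^ n) ⊆ I.minimalPrimes) (n : ℕ) :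
    I.symbPow n ≤ I ^ n := by
  intro r hr
  obtain ⟨s, hs, hsr⟩ := mem_symbPow.mp hr
  by_contra hrn
  have hmk : (Submodule.Quotient.mk r : R ⧸ (I ^ n : Ideal R)) ≠ 0 := fun h0 =>
    hrn ((Submodule.Quotient.mk_eq_zero _).mp h0)
  obtain ⟨P, hP, hannP⟩ := exists_le_isAssociatedPrime_of_isNoetherianRing R _ hmk
  rw [Submodule.bot_colon'] at hannP
  have hsann : s ∈ (Submodule.span R
      {(Submodule.Quotient.mk r : R ⧸ (I ^ n : Ideal R))}).annihilator := by
    rw [Submodule.mem_annihilator_span_singleton, ← Submodule.Quotient.mk_smul,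
      Submodule.Quotient.mk_eq_zero, smul_eq_mul]
    exact hsr
  exact hs P (h n hP) (hannP hsann)

lemma symb_le_pow_of_graded [IsNoetherianRing R] {I : Ideal R}
    (h : ∀ n : ℕ, associatedPrimes R (↑(I ^ n) ⧸
      Submodule.comap (I ^ n : Submodule R R).subtype (I ^ (n + 1) : Submodule R R)) ⊆
      I.minimalPrimes) : ∀ n : ℕ, I.symbPow n ≤ I ^ n := by
  intro n
  induction n with
  | zero => intro r _; simp
  | succ m ih =>
    intro r hr
    obtain ⟨s, hs, hsr⟩ := mem_symbPow.mp hr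
    have hrm : r ∈ I ^ m := ih (mem_symbPow.mpr
      ⟨s, hs, Ideal.pow_le_pow_right (Nat.le_succ m) hsr⟩)
    by_contra hrn
    have hy : (Submodule.Quotient.mk ⟨r, hrm⟩ : ↑(I ^ m) ⧸
        Submodule.comap (I ^ m : Submodule R R).subtype (I ^ (m + 1) : Submodule R R)) ≠ 0 := by
      intro h0
      exact hrn ((Submodule.Quotient.mk_eq_zero (Submodule.comap
        (I ^ m : Submodule R R).subtype (I ^ (m + 1) : Submodule R R))).mp h0)
    obtain ⟨P, hP, hannP⟩ := exists_le_isAssociatedPrime_of_isNoetherianRing R _ hy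
    rw [Submodule.bot_colon'] at hannP
    have hsann : s ∈ (Submodule.span R
        {(Submodule.Quotient.mk ⟨r, hrm⟩ : ↑(I ^ m) ⧸
          Submodule.comap (I ^ m : Submodule R R).subtype
            (I ^ (m + 1) : Submodule R R))}).annihilator := by
      rw [Submodule.mem_annihilator_span_singleton, ← Submodule.Quotient.mk_smul,
        Submodule.Quotient.mk_eq_zero]
      show s * r ∈ (I ^ (m + 1) : Ideal R)
      exact hsr
    exact hs P (h m hP) (hannP hsann)

end AuxLemmas



/-- A Noetherian local ring is regular if its maximal ideal is generated by `dim` elements. -/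
def IsRegularLocalRingD (A : Type*) [CommRing A] [IsLocalRing A] : Prop :=
  IsNoetherianRing A ∧ ∃ s : Finset A, Ideal.span (s : Set A) = IsLocalRing.maximalIdeal A ∧
    (s.card : WithBot ℕ∞) = ringKrullDim A

/-- A commutative ring is regular if all its localizations at primes are regular local rings. -/
def IsRegularRingD (R : Type*) [CommRing R] : Prop :=
  ∀ (P : Ideal R) [P.IsPrime], IsRegularLocalRingD (Localization.AtPrime P)

/-- For a radical ideal `I` in a regular (Noetherian) ring `R`:
`Iⁿ = I^{(n)}` for all `n` iff the associated graded ring `⊕ₙ Iⁿ/Iⁿ⁺¹` is torsion-free over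
`R/I` (every associated prime of it is a minimal prime of `I`), iff
`Ass(R/Iⁿ) ⊆ Ass(R/I)` for all `n`. -/
theorem ordinary_eq_symbolic_iff_torsionfree
    {R : Type*} [CommRing R] [IsNoetherianRing R] (hreg : IsRegularRingD R)
    (I : Ideal R) (hrad : I.IsRadical) :
    ((∀ n : ℕ, I ^ n = I.symbPow n) ↔
      ∀ P ∈ associatedPrimes R
        (⨁ n : ℕ, (↥(I ^ n) ⧸
          Submodule.comap (I ^ n : Submodule R R).subtype (I ^ (n + 1) : Submodule R R))),
        P ∈ I.minimalPrimes)
    ∧ ((∀ n : ℕ, I ^ n = I.symbPow n) ↔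
      ∀ n : ℕ, associatedPrimes R (R ⧸ I ^ n) ⊆ associatedPrimes R (R ⧸ I)) := by
  constructor
  · constructor
    · intro hA P hP
      obtain ⟨n, hPn⟩ := directSum_exists_component hP
      exact assoc_graded_subset_min hA n hPn
    · intro hB n
      refine le_antisymm (pow_le_symbPow I n) ?_
      exact symb_le_pow_of_graded (fun m P hP => hB P (directSum_of_component m hP)) n
  · constructor
    · intro hA n P hP
      exact minPrimes_subset_assoc hrad (assoc_pow_subset_min hA n hP)
    · intro hC n
      refine le_antisymm (pow_le_symbPow I n) ?_
      exact symb_le_pow_of_assoc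
        (fun m P hP => assoc_subset_min_of_radical hrad (hC m hP)) n
end
end
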